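/- Let (X,𝔅,μ,T) be an invertible measure-preserving system (T a bimeasurable bijection with T and T⁻¹ measure-preserving) and α a finite measurable partition of X. Then D̄_μ(T,α) = D̄_μ(T⁻¹,α). Consequently D̄_μ(X,T) = D̄_μ(X,T⁻¹). -/

import Mathlib

open MeasureTheory Filter Set
open scoped ENNReal symmDiff

noncomputable section

namespace EntDim

/-- An increasing sequence of positive integers `S = {s 0 < s 1 < ⋯}` (0-indexed,
so `s n` is the `(n+1)`-st element of `S`). -/
def IsPosSeq (s : ℕ → ℕ) : Prop := StrictMono s ∧ 0 < s 0

/-- `D̄(S,τ) = limsup_n n / (s_n)^τ` (with the convention that the `n`-th term,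
for `n` starting at `0`, is `(n+1)/(s n)^τ`, matching the 1-indexed definition). -/
def dimExprSup (s : ℕ → ℕ) (τ : ℝ) : ℝ≥0∞ :=
  Filter.atTop.limsup fun n : ℕ => ((n : ℝ≥0∞) + 1) / (s n : ℝ≥0∞) ^ τ

/-- `D̲(S,τ) = liminf_n n / (s_n)^τ`. -/
def dimExprInf (s : ℕ → ℕ) (τ : ℝ) : ℝ≥0∞ :=
  Filter.atTop.liminf fun n : ℕ => ((n : ℝ≥0∞) + 1) / (s n : ℝ≥0∞) ^ τ

/-- The upper dimension `D̄(S) = inf {τ ≥ 0 | D̄(S,τ) = 0}` of a sequence. -/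
def upperDim (s : ℕ → ℕ) : ℝ := sInf {τ : ℝ | 0 ≤ τ ∧ dimExprSup s τ = 0}

/-- The lower dimension `D̲(S) = inf {τ ≥ 0 | D̲(S,τ) = 0}` of a sequence. -/
def lowerDim (s : ℕ → ℕ) : ℝ := sInf {τ : ℝ | 0 ≤ τ ∧ dimExprInf s τ = 0}

variable {X : Type*} [MeasurableSpace X]

/-- `P : ι → Set X` is a finite measurable partition of `X`. -/
def IsPartition {ι : Type*} [Fintype ι] (P : ι → Set X) : Prop :=
  (∀ i, MeasurableSet (P i)) ∧ Pairwise (Function.onFun Disjoint P) ∧ (⋃ i, P i) = Set.univ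

/-- The entropy `H_μ(⋁_{i ∈ F} T^{-f i} P)` of the join of the preimage partitions
`T^{-f i} P` over a finite index set `F`. -/
def finJoinEnt (μ : Measure X) (T : X → X) {ι : Type*} [Fintype ι] (P : ι → Set X)
    (f : ℕ → ℕ) (F : Finset ℕ) : ℝ :=
  ∑ ω : F → ι, Real.negMulLog (μ (⋂ i : F, T^[f i.1] ⁻¹' (P (ω i)))).toReal

/-- `H_μ(⋁_{i=1}^{n} T^{-s_i} P)` (with `s` 0-indexed: this is the join over the
first `n` elements of the sequence). -/
def seqJoinEnt (μ : Measure X) (T : X → X) {ι : Type*} [Fintype ι] (P : ι → Set X)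
    (s : ℕ → ℕ) (n : ℕ) : ℝ :=
  finJoinEnt μ T P s (Finset.range n)

/-- `S` is an entropy generating sequence of the partition `P`:
`liminf_n (1/n) H_μ(⋁_{i=1}^n T^{-s_i} P) > 0`. -/
def IsEntGenSeq (μ : Measure X) (T : X → X) {ι : Type*} [Fintype ι] (P : ι → Set X)
    (s : ℕ → ℕ) : Prop :=
  IsPosSeq s ∧ 0 < Filter.atTop.liminf fun n : ℕ => seqJoinEnt μ T P s n / n

/-- `S` is a positive entropy sequence of the partition `P`:
`limsup_n (1/n) H_μ(⋁_{i=1}^n T^{-s_i} P) > 0`. -/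
def IsPosEntSeq (μ : Measure X) (T : X → X) {ι : Type*} [Fintype ι] (P : ι → Set X)
    (s : ℕ → ℕ) : Prop :=
  IsPosSeq s ∧ 0 < Filter.atTop.limsup fun n : ℕ => seqJoinEnt μ T P s n / n

/-- `D̄^e_μ(T,P)`: the supremum of upper dimensions over entropy generating sequences
of `P` (`0`, by convention `sSup ∅ = 0`, if there are none). This is the upper
entropy dimension `D̄_μ(T,P)` of the partition `P`. -/
def upperEntDimPart (μ : Measure X) (T : X → X) {ι : Type*} [Fintype ι]
    (P : ι → Set X) : ℝ :=
  sSup {d : ℝ | ∃ s : ℕ → ℕ, IsEntGenSeq μ T P s ∧ d = upperDim s}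

/-- `D̲^e_μ(T,P)`: the supremum of lower dimensions over entropy generating sequences,
i.e. the lower entropy dimension `D̲_μ(T,P)` of the partition `P`. -/
def lowerEntDimPart (μ : Measure X) (T : X → X) {ι : Type*} [Fintype ι]
    (P : ι → Set X) : ℝ :=
  sSup {d : ℝ | ∃ s : ℕ → ℕ, IsEntGenSeq μ T P s ∧ d = lowerDim s}

/-- `D̄^p_μ(T,P)`: the supremum of upper dimensions over positive entropy sequences of `P`. -/
def upperPosDimPart (μ : Measure X) (T : X → X) {ι : Type*} [Fintype ι]
    (P : ι → Set X) : ℝ :=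
  sSup {d : ℝ | ∃ s : ℕ → ℕ, IsPosEntSeq μ T P s ∧ d = upperDim s}

/-- `D̲^p_μ(T,P)`: the supremum of lower dimensions over positive entropy sequences of `P`. -/
def lowerPosDimPart (μ : Measure X) (T : X → X) {ι : Type*} [Fintype ι]
    (P : ι → Set X) : ℝ :=
  sSup {d : ℝ | ∃ s : ℕ → ℕ, IsPosEntSeq μ T P s ∧ d = lowerDim s}

/-- The upper metric entropy dimension `D̄_μ(X,T)`: the supremum of `D̄_μ(T,P)`
over all finite measurable partitions `P` of `X`. -/
def upperEntDim (μ : Measure X) (T : X → X) : ℝ :=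
  sSup {d : ℝ | ∃ (k : ℕ) (P : Fin k → Set X), IsPartition P ∧ d = upperEntDimPart μ T P}

/-- The lower metric entropy dimension `D̲_μ(X,T)`. -/
def lowerEntDim (μ : Measure X) (T : X → X) : ℝ :=
  sSup {d : ℝ | ∃ (k : ℕ) (P : Fin k → Set X), IsPartition P ∧ d = lowerEntDimPart μ T P}

/-- `D̄^p_μ(X,T)`: the supremum of `D̄^p_μ(T,P)` over all finite measurable partitions. -/
def upperPosDim (μ : Measure X) (T : X → X) : ℝ :=
  sSup {d : ℝ | ∃ (k : ℕ) (P : Fin k → Set X), IsPartition P ∧ d = upperPosDimPart μ T P}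

/-- The two-set partition `{A, X \ A}`. -/
def pairPart (A : Set X) : Fin 2 → Set X := ![A, Aᶜ]

/-- The dimension set `Dims_μ(X,T) = {D̄_μ(T,{A,Aᶜ}) : A ∈ 𝔅, 0 < μ(A) < 1}`. -/
def dimsSet (μ : Measure X) (T : X → X) : Set ℝ :=
  {d : ℝ | ∃ A : Set X, MeasurableSet A ∧ 0 < μ A ∧ μ A < 1 ∧
    d = upperEntDimPart μ T (pairPart A)}

/-- The system is null: every sequence entropy (along any increasing sequence of
positive integers, for any finite measurable partition) vanishes. -/
def IsNullSystem (μ : Measure X) (T : X → X) : Prop :=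
  ∀ (k : ℕ) (P : Fin k → Set X), IsPartition P → ∀ s : ℕ → ℕ, IsPosSeq s →
    Filter.atTop.limsup (fun n : ℕ => seqJoinEnt μ T P s n / n) = 0

end EntDim

namespace EntDim

section PartA
set_option linter.unusedSectionVars false
set_option linter.unusedVariables false

variable {X : Type*} [MeasurableSpace X] {μ : Measure X} [IsProbabilityMeasure μ]
  {ι : Type*} [Fintype ι] {P : ι → Set X} {T : X → X}

/-- The atom of the join partition. -/
def atom (T : X → X) {ι : Type*} [Fintype ι] (P : ι → Set X) (f : ℕ → ℕ) (F : Finset ℕ)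
    (ω : F → ι) : Set X :=
  ⋂ i : F, T^[f i.1] ⁻¹' (P (ω i))

lemma finJoinEnt_eq (f : ℕ → ℕ) (F : Finset ℕ) :
    finJoinEnt μ T P f F = ∑ ω : F → ι, Real.negMulLog (μ (atom T P f F ω)).toReal := rfl

lemma atom_measurable (hT : Measurable T) (hP : IsPartition P) (f : ℕ → ℕ) (F : Finset ℕ)
    (ω : F → ι) : MeasurableSet (atom T P f F ω) :=
  MeasurableSet.iInter fun i => (hT.iterate _) (hP.1 _)

lemma negMulLog_sum_le {α : Type*} (t : Finset α) (x : α → ℝ) (hx : ∀ i ∈ t, 0 ≤ x i) :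
    Real.negMulLog (∑ i ∈ t, x i) ≤ ∑ i ∈ t, Real.negMulLog (x i) := by
  have h1 : Real.negMulLog (∑ i ∈ t, x i)
      = ∑ i ∈ t, x i * (-Real.log (∑ j ∈ t, x j)) := by
    rw [Real.negMulLog, ← Finset.sum_mul]; ring
  rw [h1]
  refine Finset.sum_le_sum fun i hi => ?_
  rcases eq_or_lt_of_le (hx i hi) with h0 | h0
  · simp [← h0]
  · have hle : x i ≤ ∑ j ∈ t, x j := Finset.single_le_sum hx hi
    have := Real.log_le_log h0 hle
    rw [Real.negMulLog]
    nlinarith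

lemma exists_part_index (hP : IsPartition P) (x : X) : ∃ i, x ∈ P i :=
  Set.mem_iUnion.mp (hP.2.2 ▸ Set.mem_univ x)

lemma part_index_unique (hP : IsPartition P) {i j : ι} {x : X} (hi : x ∈ P i) (hj : x ∈ P j) :
    i = j := by
  by_contra hne
  exact Set.disjoint_left.mp (hP.2.1 hne) hi hj

lemma mem_atom_iff {f : ℕ → ℕ} {F : Finset ℕ} {ω : F → ι} {x : X} :
    x ∈ atom T P f F ω ↔ ∀ i : F, T^[f i.1] x ∈ P (ω i) := by
  simp [atom]

lemma atom_pairwise_disjoint (hP : IsPartition P) (f : ℕ → ℕ) (F : Finset ℕ) :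
    Pairwise (Function.onFun Disjoint (atom T P f F)) := by
  intro ω ω' hne
  have h : ∃ i : F, ω i ≠ ω' i := by
    by_contra h; push_neg at h; exact hne (funext h)
  obtain ⟨i, hi⟩ := h
  refine Set.disjoint_left.mpr fun x hx hx' => ?_
  exact hi (part_index_unique hP (mem_atom_iff.mp hx i) (mem_atom_iff.mp hx' i))

lemma atom_cover (hP : IsPartition P) (f : ℕ → ℕ) (F : Finset ℕ) (x : X) :
    ∃ ω : F → ι, x ∈ atom T P f F ω := by
  choose ω hω using fun i : F => exists_part_index hP (T^[f i.1] x)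
  exact ⟨ω, mem_atom_iff.mpr hω⟩

lemma sum_measure_atom (hT : Measurable T) (hP : IsPartition P) (f : ℕ → ℕ) (F : Finset ℕ) :
    ∑ ω : F → ι, μ (atom T P f F ω) = 1 := by
  classical
  have hu : ⋃ ω : F → ι, atom T P f F ω = Set.univ := by
    ext x; simp only [Set.mem_iUnion, Set.mem_univ, iff_true]; exact atom_cover hP f F x
  have h := measure_iUnion (μ := μ) (atom_pairwise_disjoint hP f F)
    (fun ω => atom_measurable hT hP f F ω)
  rw [hu, measure_univ, tsum_fintype] at h
  exact h.symm

lemma measure_atom_eq_sum (hT : Measurable T) (hP : IsPartition P) (f : ℕ → ℕ)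
    {F G : Finset ℕ} (hFG : F ⊆ G) (η : F → ι) [DecidableEq (F → ι)] :
    μ (atom T P f F η)
      = ∑ ω ∈ Finset.univ.filter (fun ω : G → ι => (fun i : F => ω ⟨i.1, hFG i.2⟩) = η),
          μ (atom T P f G ω) := by
  have hset : atom T P f F η
      = ⋃ ω ∈ Finset.univ.filter (fun ω : G → ι => (fun i : F => ω ⟨i.1, hFG i.2⟩) = η),
          atom T P f G ω := by
    ext x
    simp only [Set.mem_iUnion, Finset.mem_filter, Finset.mem_univ, true_and]
    constructor
    · intro hx
      obtain ⟨ω, hω⟩ := atom_cover hP f G x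
      refine ⟨ω, ?_, hω⟩
      funext i
      exact part_index_unique hP (mem_atom_iff.mp hω ⟨i.1, hFG i.2⟩) (mem_atom_iff.mp hx i)
    · rintro ⟨ω, hωη, hω⟩
      subst hωη
      exact mem_atom_iff.mpr fun i => mem_atom_iff.mp hω ⟨i.1, hFG i.2⟩
  rw [hset, measure_biUnion_finset ?_ fun ω _ => atom_measurable hT hP f G ω]
  intro ω hω ω' hω' hne
  exact atom_pairwise_disjoint hP f G hne

lemma finJoinEnt_mono (hT : Measurable T) (hP : IsPartition P) (f : ℕ → ℕ)
    {F G : Finset ℕ} (hFG : F ⊆ G) : finJoinEnt μ T P f F ≤ finJoinEnt μ T P f G := by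
  classical
  rw [finJoinEnt_eq, finJoinEnt_eq]
  have key : ∀ η : F → ι, Real.negMulLog (μ (atom T P f F η)).toReal
      ≤ ∑ ω ∈ Finset.univ.filter (fun ω : G → ι => (fun i : F => ω ⟨i.1, hFG i.2⟩) = η),
          Real.negMulLog (μ (atom T P f G ω)).toReal := by
    intro η
    rw [measure_atom_eq_sum (μ := μ) hT hP f hFG η,
      ENNReal.toReal_sum (fun ω _ => measure_ne_top μ _)]
    exact negMulLog_sum_le _ _ fun ω _ => ENNReal.toReal_nonneg
  calc ∑ η : F → ι, Real.negMulLog (μ (atom T P f F η)).toReal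
      ≤ ∑ η : F → ι, ∑ ω ∈ Finset.univ.filter
          (fun ω : G → ι => (fun i : F => ω ⟨i.1, hFG i.2⟩) = η),
          Real.negMulLog (μ (atom T P f G ω)).toReal :=
        Finset.sum_le_sum fun η _ => key η
    _ = ∑ ω : G → ι, Real.negMulLog (μ (atom T P f G ω)).toReal :=
        Finset.sum_fiberwise _ _ _

lemma finJoinEnt_nonneg (f : ℕ → ℕ) (F : Finset ℕ) : 0 ≤ finJoinEnt μ T P f F := by
  rw [finJoinEnt_eq]
  refine Finset.sum_nonneg fun ω _ => Real.negMulLog_nonneg ENNReal.toReal_nonneg ?_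
  exact ENNReal.toReal_le_of_le_ofReal one_pos.le (by simpa using prob_le_one)

lemma sum_negMulLog_le_log_card {α : Type*} [Fintype α] (p : α → ℝ)
    (h0 : ∀ a, 0 ≤ p a) (h1 : ∑ a, p a = 1) :
    ∑ a, Real.negMulLog (p a) ≤ Real.log (Fintype.card α) := by
  classical
  have hne : Nonempty α := by
    by_contra h
    rw [not_nonempty_iff] at h
    rw [Finset.univ_eq_empty, Finset.sum_empty] at h1
    norm_num at h1
  have hm : (0:ℝ) < (Fintype.card α : ℝ) := by exact_mod_cast Fintype.card_pos
  have hw : ∑ _a : α, ((Fintype.card α : ℝ))⁻¹ = 1 := by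
    rw [Finset.sum_const, Finset.card_univ, nsmul_eq_mul]
    field_simp
  have jensen := Real.concaveOn_negMulLog.le_map_sum (t := (Finset.univ : Finset α))
    (w := fun _ => ((Fintype.card α : ℝ))⁻¹) (p := p)
    (fun _ _ => by positivity) hw (fun a _ => h0 a)
  simp only [smul_eq_mul, ← Finset.mul_sum, h1, mul_one] at jensen
  have hlog : Real.negMulLog ((Fintype.card α : ℝ))⁻¹
      = (Fintype.card α : ℝ)⁻¹ * Real.log (Fintype.card α) := by
    rw [Real.negMulLog, Real.log_inv]; ring
  rw [hlog] at jensen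
  calc ∑ a, Real.negMulLog (p a)
      = (Fintype.card α : ℝ) * ((Fintype.card α : ℝ)⁻¹ * ∑ a, Real.negMulLog (p a)) := by
        field_simp
    _ ≤ (Fintype.card α : ℝ) * ((Fintype.card α : ℝ)⁻¹ * Real.log (Fintype.card α)) := by
        exact mul_le_mul_of_nonneg_left jensen hm.le
    _ = Real.log (Fintype.card α) := by field_simp

lemma finJoinEnt_le_card (hT : Measurable T) (hP : IsPartition P) (f : ℕ → ℕ) (F : Finset ℕ) :
    finJoinEnt μ T P f F ≤ Real.log (Fintype.card ι) * F.card := by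
  classical
  rw [finJoinEnt_eq]
  have h1 : ∑ ω : F → ι, (μ (atom T P f F ω)).toReal = 1 := by
    rw [← ENNReal.toReal_sum (fun ω _ => measure_ne_top μ _), sum_measure_atom hT hP f F,
      ENNReal.toReal_one]
  refine (sum_negMulLog_le_log_card _ (fun ω => ENNReal.toReal_nonneg) h1).trans ?_
  have hcard : Fintype.card (F → ι) = Fintype.card ι ^ F.card := by
    rw [Fintype.card_fun, Fintype.card_coe]
  rw [hcard]
  push_cast
  rw [Real.log_pow]
  exact le_of_eq (by ring)

lemma finJoinEnt_shift (hT : Measurable T) (hTm : MeasurePreserving T μ μ) (hP : IsPartition P)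
    (f : ℕ → ℕ) (c : ℕ) (F : Finset ℕ) :
    finJoinEnt μ T P (fun i => c + f i) F = finJoinEnt μ T P f F := by
  rw [finJoinEnt_eq, finJoinEnt_eq]
  refine Finset.sum_congr rfl fun ω _ => ?_
  congr 1
  have hset : atom T P (fun i => c + f i) F ω = T^[c] ⁻¹' atom T P f F ω := by
    ext x
    simp only [atom, Set.mem_iInter, Set.mem_preimage]
    refine forall_congr' fun i => ?_
    rw [Nat.add_comm, Function.iterate_add_apply]
  rw [hset, (hTm.iterate c).measure_preimage (atom_measurable hT hP f F ω).nullMeasurableSet]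

lemma finJoinEnt_reverse (e : X ≃ᵐ X) (he : MeasurePreserving (⇑e) μ μ) (hP : IsPartition P)
    (f : ℕ → ℕ) (m : ℕ) (F : Finset ℕ) (hf : ∀ i ∈ F, f i ≤ m) :
    finJoinEnt μ (⇑e) P f F = finJoinEnt μ (⇑e.symm) P (fun i => m - f i) F := by
  rw [finJoinEnt_eq, finJoinEnt_eq]
  refine Finset.sum_congr rfl fun ω _ => ?_
  congr 1
  have hset : atom (⇑e) P f F ω = (⇑e)^[m] ⁻¹' atom (⇑e.symm) P (fun i => m - f i) F ω := by
    ext x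
    simp only [atom, Set.mem_iInter, Set.mem_preimage]
    refine forall_congr' fun i => ?_
    have h1 : (⇑e.symm)^[m - f i.1] ((⇑e)^[m] x) = (⇑e)^[f i.1] x := by
      have h2 : (⇑e)^[m] x = (⇑e)^[m - f i.1] ((⇑e)^[f i.1] x) := by
        rw [← Function.iterate_add_apply, Nat.sub_add_cancel (hf i.1 i.2)]
      rw [h2]
      exact (Function.LeftInverse.iterate e.symm_apply_apply (m - f i.1)) _
    rw [h1]
  rw [hset, (he.iterate m).measure_preimage
    (atom_measurable e.symm.measurable hP _ F ω).nullMeasurableSet]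

lemma finJoinEnt_reindex (f : ℕ → ℕ) (F : Finset ℕ) (φ : ℕ → ℕ)
    (hφ : Set.InjOn φ F) :
    finJoinEnt μ T P (fun i => f (φ i)) F = finJoinEnt μ T P f (F.image φ) := by
  classical
  rw [finJoinEnt_eq, finJoinEnt_eq]
  have hb : Function.Bijective (fun j : F =>
      (⟨φ j.1, Finset.mem_image_of_mem φ j.2⟩ : (F.image φ : Finset ℕ))) := by
    constructor
    · intro a b hab
      apply Subtype.ext
      exact hφ (by exact_mod_cast a.2) (by exact_mod_cast b.2) (congrArg Subtype.val hab)
    · rintro ⟨y, hy⟩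
      obtain ⟨x, hx, rfl⟩ := Finset.mem_image.mp hy
      exact ⟨⟨x, hx⟩, rfl⟩
  set b := Equiv.ofBijective _ hb with hbdef
  have hbval : ∀ j : F, (b j).1 = φ j.1 := fun j => rfl
  refine Fintype.sum_equiv (b.arrowCongr (Equiv.refl ι)) _ _ fun ω => ?_
  have hset : atom T P (fun i => f (φ i)) F ω
      = atom T P f (F.image φ) ((b.arrowCongr (Equiv.refl ι)) ω) := by
    ext x
    simp only [atom, Set.mem_iInter, Equiv.arrowCongr_apply, Function.comp_apply,
      Equiv.refl_apply]
    constructor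
    · intro h y
      have h2 := h (b.symm y)
      have hy : (y : ℕ) = φ ((b.symm y) : ℕ) := by
        rw [← hbval (b.symm y), b.apply_symm_apply]
      rw [hy]
      exact h2
    · intro h j
      have h2 := h (b j)
      rw [b.symm_apply_apply] at h2
      have hy : φ (j : ℕ) = ((b j) : ℕ) := rfl
      rw [← hy] at h2
      exact h2
  rw [hset]

end PartA

section PartB

/-- State recursion: `(current block length, current target)`. -/
def blkF (nt : ℕ → ℕ) : ℕ → ℕ × ℕ
  | 0 => (1, nt 2 + 1)
  | (k+1) =>
      if 16 * (blkF nt k).1 ≤ (blkF nt k).2 then (2 * (blkF nt k).1, (blkF nt k).2)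
      else ((blkF nt k).2, nt (16 * (blkF nt k).2) + 1)

/-- Block lengths. -/
def bn (nt : ℕ → ℕ) (k : ℕ) : ℕ := (blkF nt k).1

/-- Targets. -/
def bt (nt : ℕ → ℕ) (k : ℕ) : ℕ := (blkF nt k).2

variable {nt : ℕ → ℕ}

lemma blkF_t_pos : ∀ k, 1 ≤ (blkF nt k).2 := by
  intro k
  induction k with
  | zero => simp [blkF]
  | succ k ih =>
      rw [blkF]
      split <;> simp <;> omega

lemma bn_pos : ∀ k, 1 ≤ bn nt k := by
  intro k
  induction k with
  | zero => simp [bn, blkF]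
  | succ k ih =>
      have ht := blkF_t_pos (nt := nt) k
      rw [bn, blkF]
      split <;> simp [bn] at ih ⊢ <;> omega

lemma blkF_inv (hnt : ∀ x, x ≤ nt x) : ∀ k, 2 * (blkF nt k).1 ≤ (blkF nt k).2 := by
  intro k
  induction k with
  | zero => have := hnt 2; simp [blkF]; omega
  | succ k ih =>
      have hv := bn_pos (nt := nt) k
      rw [bn] at hv
      rw [blkF]
      split
      · next h => simp; omega
      · next h => have := hnt (16 * (blkF nt k).2); simp; omega

lemma bn_ratio (hnt : ∀ x, x ≤ nt x) (k : ℕ) :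
    2 * bn nt k ≤ bn nt (k+1) ∧ bn nt (k+1) ≤ 16 * bn nt k := by
  have hinv := blkF_inv hnt k
  have hv := bn_pos (nt := nt) k
  rw [bn] at hv
  unfold bn
  rw [blkF]
  split
  · next h => simp; omega
  · next h => simp; omega

lemma bn_strictMono (hnt : ∀ x, x ≤ nt x) : StrictMono (bn nt) := by
  apply strictMono_nat_of_lt_succ
  intro k
  have h := bn_ratio hnt k
  have := bn_pos (nt := nt) k
  omega

lemma bn_pow (hnt : ∀ x, x ≤ nt x) (k : ℕ) : 2 ^ k ≤ bn nt k := by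
  induction k with
  | zero => simpa using bn_pos (nt := nt) 0
  | succ k ih =>
      have h := (bn_ratio hnt k).1
      calc 2 ^ (k+1) = 2 * 2 ^ k := by ring
        _ ≤ 2 * bn nt k := by omega
        _ ≤ bn nt (k+1) := h

lemma blkF_t_mem {G : Set ℕ} (hG : ∀ x, nt x ∈ G) : ∀ k, (blkF nt k).2 - 1 ∈ G := by
  intro k
  induction k with
  | zero => simp [blkF]; exact hG 2
  | succ k ih =>
      rw [blkF]
      split
      · simpa using ih
      · simp; exact hG _

lemma bn_hits {G : Set ℕ} (hnt : ∀ x, x ≤ nt x) (hG : ∀ x, nt x ∈ G) (K : ℕ) :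
    ∃ k, K ≤ k ∧ bn nt k - 1 ∈ G := by
  by_contra h
  push_neg at h
  -- every step from K on is a doubling step
  have hstep : ∀ k, K ≤ k → 16 * (blkF nt k).1 ≤ (blkF nt k).2 := by
    intro k hk
    by_contra hbr
    refine h (k+1) (by omega) ?_
    have : bn nt (k+1) = (blkF nt k).2 := by
      rw [bn, blkF]
      split
      · next hh => exact absurd hh hbr
      · rfl
    rw [this]
    exact blkF_t_mem hG k
  have hconst : ∀ j, (blkF nt (K + j)).2 = (blkF nt K).2 ∧
      2 ^ j * (blkF nt K).1 ≤ (blkF nt (K + j)).1 := by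
    intro j
    induction j with
    | zero => simp
    | succ j ih =>
        have hs := hstep (K + j) (by omega)
        have : blkF nt (K + (j+1)) = (2 * (blkF nt (K+j)).1, (blkF nt (K+j)).2) := by
          rw [show K + (j+1) = (K+j) + 1 by omega, blkF, if_pos hs]
        rw [this]
        constructor
        · simp [ih.1]
        · simp
          calc 2 ^ (j+1) * (blkF nt K).1 = 2 * (2 ^ j * (blkF nt K).1) := by ring
            _ ≤ 2 * (blkF nt (K+j)).1 := by omega
  -- contradiction: lengths grow unboundedly but stay below the fixed target
  set t := (blkF nt K).2 with htdef
  have h1 := (hconst t).2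
  have h2 := hstep (K + t) (by omega)
  have h3 : 2 ^ t * 1 ≤ (blkF nt (K + t)).1 := by
    have := bn_pos (nt := nt) K
    rw [bn] at this
    calc 2 ^ t * 1 ≤ 2 ^ t * (blkF nt K).1 := by
          exact Nat.mul_le_mul_left _ this
      _ ≤ _ := h1
  have h4 : t < 2 ^ t := Nat.lt_two_pow_self (n := t)
  rw [(hconst t).1] at h2
  omega

end PartB

section PartC

/-- Positions of block starts. -/
def NN (nt : ℕ → ℕ) (k : ℕ) : ℕ := ∑ j ∈ Finset.range k, bn nt j

/-- Shift constants for the blocks. -/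
def cc (s nt : ℕ → ℕ) (k : ℕ) : ℕ := (k + 1) + ∑ j ∈ Finset.range k, s (bn nt j - 1)

variable {s nt : ℕ → ℕ}

lemma NN_ge (k : ℕ) : k ≤ NN nt k := by
  calc k = ∑ _j ∈ Finset.range k, 1 := by simp
    _ ≤ NN nt k := Finset.sum_le_sum fun j _ => bn_pos j

lemma NN_succ (k : ℕ) : NN nt (k+1) = NN nt k + bn nt k := Finset.sum_range_succ _ _

lemma NN_strictMono : StrictMono (NN nt) := by
  apply strictMono_nat_of_lt_succ
  intro k
  have := bn_pos (nt := nt) k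
  rw [NN_succ]; omega

lemma exists_blk (p : ℕ) : ∃ k, p < NN nt (k+1) := ⟨p, by have := NN_ge (nt := nt) (p+1); omega⟩

/-- The index of the block containing position `p`. -/
def blkIdx (nt : ℕ → ℕ) (p : ℕ) : ℕ := Nat.find (exists_blk (nt := nt) p)

lemma blkIdx_spec (p : ℕ) : NN nt (blkIdx nt p) ≤ p ∧ p < NN nt (blkIdx nt p + 1) := by
  refine ⟨?_, Nat.find_spec (exists_blk (nt := nt) p)⟩
  rcases Nat.eq_zero_or_pos (blkIdx nt p) with h | h
  · rw [h]; simp [NN]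
  · have h2 := Nat.find_min (exists_blk (nt := nt) p)
      (show blkIdx nt p - 1 < blkIdx nt p from by omega)
    rw [show blkIdx nt p - 1 + 1 = blkIdx nt p from by omega] at h2
    omega

lemma blkIdx_eq {p k : ℕ} (h1 : NN nt k ≤ p) (h2 : p < NN nt (k+1)) : blkIdx nt p = k := by
  have hs := blkIdx_spec (nt := nt) p
  rcases lt_trichotomy (blkIdx nt p) k with h | h | h
  · have := (NN_strictMono (nt := nt)).monotone (show blkIdx nt p + 1 ≤ k by omega)
    omega
  · exact h
  · have := (NN_strictMono (nt := nt)).monotone (show k + 1 ≤ blkIdx nt p by omega)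
    omega

/-- The constructed sequence for the inverse map. -/
def ss (s nt : ℕ → ℕ) (p : ℕ) : ℕ :=
  cc s nt (blkIdx nt p) +
    (s (bn nt (blkIdx nt p) - 1) - s (bn nt (blkIdx nt p) - 1 - (p - NN nt (blkIdx nt p))))

lemma ss_eval {k i : ℕ} (hi : i < bn nt k) :
    ss s nt (NN nt k + i) = cc s nt k + (s (bn nt k - 1) - s (bn nt k - 1 - i)) := by
  have hb : blkIdx nt (NN nt k + i) = k :=
    blkIdx_eq (by omega) (by rw [NN_succ]; omega)
  rw [ss, hb]
  have h2 : NN nt k + i - NN nt k = i := by omega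
  rw [h2]

lemma cc_succ (k : ℕ) : cc s nt (k+1) = cc s nt k + s (bn nt k - 1) + 1 := by
  rw [cc, cc, Finset.sum_range_succ]
  ring

lemma ss_strictMono (hs : StrictMono s) (hs0 : 1 ≤ s 0) : StrictMono (ss s nt) := by
  apply strictMono_nat_of_lt_succ
  intro p
  have hsp := blkIdx_spec (nt := nt) p
  set k := blkIdx nt p with hk
  set i := p - NN nt k with hi
  have hip : p = NN nt k + i := by omega
  have hilt : i < bn nt k := by
    have := NN_succ (nt := nt) k
    omega
  rcases Nat.lt_or_ge (i + 1) (bn nt k) with hcase | hcase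
  · -- stay in the same block
    have e1 : ss s nt p = cc s nt k + (s (bn nt k - 1) - s (bn nt k - 1 - i)) := by
      rw [hip]; exact ss_eval hilt
    have e2 : ss s nt (p+1) = cc s nt k + (s (bn nt k - 1) - s (bn nt k - 1 - (i+1))) := by
      rw [show p + 1 = NN nt k + (i+1) by omega]; exact ss_eval hcase
    rw [e1, e2]
    have hmono1 : s (bn nt k - 1 - (i+1)) < s (bn nt k - 1 - i) := hs (by omega)
    have hle1 : s (bn nt k - 1 - i) ≤ s (bn nt k - 1) := hs.monotone (by omega)
    omega
  · -- move to the next block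
    have hieq : i + 1 = bn nt k := by omega
    have e1 : ss s nt p = cc s nt k + (s (bn nt k - 1) - s (bn nt k - 1 - i)) := by
      rw [hip]; exact ss_eval hilt
    have hp1 : p + 1 = NN nt (k+1) := by rw [NN_succ]; omega
    have e2 : ss s nt (p+1) = cc s nt (k+1) + (s (bn nt (k+1) - 1) - s (bn nt (k+1) - 1 - 0)) := by
      rw [hp1, show NN nt (k+1) = NN nt (k+1) + 0 by omega]
      exact ss_eval (by have := bn_pos (nt := nt) (k+1); omega)
    rw [e1, e2, cc_succ]
    simp only [Nat.sub_zero, Nat.sub_self]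
    have hle1 : s (bn nt k - 1 - i) ≤ s (bn nt k - 1) := hs.monotone (by omega)
    omega

lemma ss_isPosSeq (hs : StrictMono s) (hs0 : 1 ≤ s 0) : IsPosSeq (ss s nt) := by
  refine ⟨ss_strictMono hs hs0, ?_⟩
  have h0 : ss s nt 0 = cc s nt 0 + (s (bn nt 0 - 1) - s (bn nt 0 - 1 - 0)) := by
    rw [show (0:ℕ) = NN nt 0 + 0 by simp [NN]]
    exact ss_eval (by have := bn_pos (nt := nt) 0; omega)
  rw [h0]
  simp [cc]

/-- Value of the top element of block `k`. -/
lemma ss_top (hs : StrictMono s) (k : ℕ) :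
    ss s nt (NN nt (k+1) - 1) = cc s nt k + (s (bn nt k - 1) - s 0) := by
  have hb := bn_pos (nt := nt) k
  have h1 : NN nt (k+1) - 1 = NN nt k + (bn nt k - 1) := by
    rw [NN_succ]; omega
  rw [h1, ss_eval (by omega)]
  congr 3
  omega

/-- `N (k+1) ≤ 2 * n k`. -/
lemma NN_le (hnt : ∀ x, x ≤ nt x) (k : ℕ) : NN nt (k+1) ≤ 2 * bn nt k := by
  induction k with
  | zero =>
      rw [NN_succ]
      simp [NN]
      omega
  | succ k ih =>
      have h := (bn_ratio hnt k).1
      rw [NN_succ]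
      omega

lemma cc_le (hs : StrictMono s) (hnt : ∀ x, x ≤ nt x) (k : ℕ) :
    cc s nt k ≤ (k+1) + k * s (bn nt k - 1) := by
  rw [cc]
  have : ∑ j ∈ Finset.range k, s (bn nt j - 1) ≤ ∑ _j ∈ Finset.range k, s (bn nt k - 1) := by
    refine Finset.sum_le_sum fun j hj => ?_
    refine hs.monotone ?_
    have h1 := bn_strictMono hnt |>.monotone (show j ≤ k by exact (Finset.mem_range.mp hj).le)
    omega
  simp only [Finset.sum_const, Finset.card_range, smul_eq_mul] at this
  omega

end PartC

section PartD
set_option linter.unusedSectionVars false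

variable {X : Type*} [MeasurableSpace X] {μ : Measure X} [IsProbabilityMeasure μ]
  {ι : Type*} [Fintype ι] {P : ι → Set X}

lemma finJoinEnt_congr {T : X → X} {f g : ℕ → ℕ} {F : Finset ℕ} (h : ∀ i ∈ F, f i = g i) :
    finJoinEnt μ T P f F = finJoinEnt μ T P g F := by
  rw [finJoinEnt_eq, finJoinEnt_eq]
  refine Finset.sum_congr rfl fun ω _ => ?_
  have hset : atom T P f F ω = atom T P g F ω := by
    unfold atom
    exact Set.iInter_congr fun i => by rw [h i.1 i.2]
  rw [hset]

lemma block_entropy (e : X ≃ᵐ X) (he : MeasurePreserving (⇑e) μ μ) (hP : IsPartition P)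
    {s nt : ℕ → ℕ} (hs : StrictMono s) {k N : ℕ} (hN : NN nt (k+1) ≤ N) :
    seqJoinEnt μ (⇑e) P s (bn nt k) ≤ seqJoinEnt μ (⇑e.symm) P (ss s nt) N := by
  have hesm : Measurable (⇑e.symm) := e.symm.measurable
  set n := bn nt k with hn
  have hbpos : 1 ≤ n := bn_pos k
  have h5 : seqJoinEnt μ (⇑e) P s n
      = finJoinEnt μ (⇑e.symm) P (fun i => s (n-1) - s i) (Finset.range n) := by
    rw [seqJoinEnt]
    refine finJoinEnt_reverse e he hP s (s (n-1)) (Finset.range n) fun i hi => ?_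
    exact hs.monotone (by have := Finset.mem_range.mp hi; omega)
  have h4 : finJoinEnt μ (⇑e.symm) P (fun i => cc s nt k + (s (n-1) - s i)) (Finset.range n)
      = finJoinEnt μ (⇑e.symm) P (fun i => s (n-1) - s i) (Finset.range n) :=
    finJoinEnt_shift hesm (he.symm e) hP _ (cc s nt k) _
  have h3 : finJoinEnt μ (⇑e.symm) P (fun i => ss s nt (NN nt k + (n - 1 - i))) (Finset.range n)
      = finJoinEnt μ (⇑e.symm) P (fun i => cc s nt k + (s (n-1) - s i)) (Finset.range n) := by
    refine finJoinEnt_congr fun i hi => ?_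
    have hi' := Finset.mem_range.mp hi
    rw [ss_eval (by omega)]
    have h7 : n - 1 - (n - 1 - i) = i := by omega
    rw [h7]
  have himg : (Finset.range n).image (fun i => NN nt k + (n - 1 - i))
      = Finset.Ico (NN nt k) (NN nt k + n) := by
    ext a
    simp only [Finset.mem_image, Finset.mem_range, Finset.mem_Ico]
    constructor
    · rintro ⟨i, hi, rfl⟩; omega
    · intro ha; exact ⟨n - 1 - (a - NN nt k), by omega, by omega⟩
  have h2 : finJoinEnt μ (⇑e.symm) P (fun i => ss s nt (NN nt k + (n - 1 - i))) (Finset.range n)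
      = finJoinEnt μ (⇑e.symm) P (ss s nt) (Finset.Ico (NN nt k) (NN nt k + n)) := by
    rw [← himg]
    refine finJoinEnt_reindex (ss s nt) (Finset.range n) _ (fun a ha b hb hab => ?_)
    simp only [Finset.coe_range, Set.mem_Iio] at ha hb
    omega
  have h1 : finJoinEnt μ (⇑e.symm) P (ss s nt) (Finset.Ico (NN nt k) (NN nt k + n))
      ≤ seqJoinEnt μ (⇑e.symm) P (ss s nt) N := by
    rw [seqJoinEnt]
    refine finJoinEnt_mono hesm hP _ fun a ha => ?_
    have := Finset.mem_Ico.mp ha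
    rw [Finset.mem_range]
    have h8 : NN nt k + n = NN nt (k+1) := (NN_succ k).symm
    omega
  calc seqJoinEnt μ (⇑e) P s n = _ := h5
    _ = _ := h4.symm
    _ = _ := h3.symm
    _ = _ := h2
    _ ≤ _ := h1

lemma seqJoinEnt_div_le (T : X → X) (hT : Measurable T) (hP : IsPartition P) (f : ℕ → ℕ)
    (n : ℕ) : seqJoinEnt μ T P f n / n ≤ max (Real.log (Fintype.card ι)) 0 := by
  rcases Nat.eq_zero_or_pos n with h | h
  · subst h; simp
  · have hb := finJoinEnt_le_card (μ := μ) hT hP f (Finset.range n)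
    rw [Finset.card_range] at hb
    have hn : (0:ℝ) < n := by exact_mod_cast h
    rw [div_le_iff₀ hn]
    calc seqJoinEnt μ T P f n ≤ Real.log (Fintype.card ι) * n := hb
      _ ≤ max (Real.log (Fintype.card ι)) 0 * n := by
          exact mul_le_mul_of_nonneg_right (le_max_left _ _) hn.le

lemma ss_entGen (e : X ≃ᵐ X) (he : MeasurePreserving (⇑e) μ μ) (hP : IsPartition P)
    {s nt : ℕ → ℕ} (hs : StrictMono s) (hs0 : 1 ≤ s 0) (hnt : ∀ x, x ≤ nt x)
    (hgen : IsEntGenSeq μ (⇑e) P s) : IsEntGenSeq μ (⇑e.symm) P (ss s nt) := by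
  refine ⟨ss_isPosSeq hs hs0, ?_⟩
  set l := Filter.atTop.liminf fun n : ℕ => seqJoinEnt μ (⇑e) P s n / n with hl
  have hl0 : 0 < l := hgen.2
  have hbd : Filter.atTop.IsBoundedUnder (· ≥ ·) fun n : ℕ => seqJoinEnt μ (⇑e) P s n / n :=
    Filter.isBoundedUnder_of ⟨0, fun n =>
      div_nonneg (finJoinEnt_nonneg _ _) (Nat.cast_nonneg n)⟩
  have hev := Filter.eventually_lt_of_lt_liminf (show l/2 < l by linarith) hbd
  obtain ⟨n₀, hn₀⟩ := Filter.eventually_atTop.mp hev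
  have hub : Filter.atTop.IsCoboundedUnder (· ≥ ·)
      fun N : ℕ => seqJoinEnt μ (⇑e.symm) P (ss s nt) N / N := by
    refine Filter.IsBoundedUnder.isCoboundedUnder_ge
      (Filter.isBoundedUnder_of ⟨max (Real.log (Fintype.card ι)) 0, fun N => ?_⟩)
    exact seqJoinEnt_div_le (⇑e.symm) e.symm.measurable hP (ss s nt) N
  have hev2 : ∀ᶠ N : ℕ in Filter.atTop,
      l/64 ≤ seqJoinEnt μ (⇑e.symm) P (ss s nt) N / N := by
    filter_upwards [Filter.eventually_ge_atTop (NN nt (n₀+1))] with N hNge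
    have hksp := blkIdx_spec (nt := nt) N
    set k := blkIdx nt N with hk
    have hk1 : n₀ + 1 ≤ k := by
      by_contra hcon
      have := (NN_strictMono (nt := nt)).monotone (show k + 1 ≤ n₀ + 1 by omega)
      omega
    have hkm : NN nt ((k-1)+1) ≤ N := by
      rw [show k-1+1 = k by omega]; exact hksp.1
    have hblock := block_entropy e he hP hs (nt := nt) (k := k-1) (N := N) hkm
    set B := bn nt (k-1) with hB
    have hBpos : 1 ≤ B := bn_pos _
    have hbn₀ : n₀ ≤ B := by
      have h1 : n₀ < 2 ^ n₀ := Nat.lt_two_pow_self (n := n₀)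
      have h2 : 2 ^ n₀ ≤ bn nt n₀ := bn_pow hnt n₀
      have h3 : bn nt n₀ ≤ bn nt (k-1) := (bn_strictMono hnt).monotone (by omega)
      omega
    have hHn := hn₀ B hbn₀
    have hratio : bn nt k ≤ 16 * B := by
      have := (bn_ratio hnt (k-1)).2
      rw [show k-1+1 = k by omega] at this
      exact this
    have hNle : N ≤ 32 * B := by
      have h1 := NN_le hnt k
      omega
    have hNpos : 0 < N := by
      have := NN_ge (nt := nt) (n₀+1)
      omega
    have hNposR : (0:ℝ) < (N:ℝ) := by exact_mod_cast hNpos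
    have hBposR : (0:ℝ) < (B:ℝ) := by exact_mod_cast hBpos
    rw [le_div_iff₀ hNposR]
    have h9 : l/2 * B ≤ seqJoinEnt μ (⇑e) P s B := by
      rw [lt_div_iff₀ hBposR] at hHn
      linarith
    have hNleR : (N:ℝ) ≤ 32 * (B:ℝ) := by exact_mod_cast hNle
    nlinarith [hblock]
  calc (0:ℝ) < l/64 := by linarith
    _ ≤ _ := Filter.le_liminf_of_le hub hev2

end PartD

section PartE1

lemma seq_lb {s : ℕ → ℕ} (hs : IsPosSeq s) (n : ℕ) : n + 1 ≤ s n := by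
  induction n with
  | zero => exact hs.2
  | succ n ih => have := hs.1 (show n < n + 1 by omega); omega

lemma dim_term_eq (m n : ℕ) (hm : 0 < m) (τ : ℝ) :
    ((n : ℝ≥0∞) + 1) / (m : ℝ≥0∞) ^ τ = ENNReal.ofReal (((n:ℝ)+1) / (m:ℝ)^τ) := by
  have hmr : (0:ℝ) < (m:ℝ) := by exact_mod_cast hm
  have e1 : ((n:ℝ≥0∞)+1) = ENNReal.ofReal ((n:ℝ)+1) := by
    rw [ENNReal.ofReal_add (Nat.cast_nonneg n) zero_le_one, ENNReal.ofReal_natCast,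
      ENNReal.ofReal_one]
  have e2 : (m:ℝ≥0∞)^τ = ENNReal.ofReal ((m:ℝ)^τ) := by
    rw [← ENNReal.ofReal_natCast m, ENNReal.ofReal_rpow_of_pos hmr]
  rw [e1, e2, ← ENNReal.ofReal_div_of_pos (Real.rpow_pos_of_pos hmr τ)]

lemma dimExprSup_zero_of_one_lt {s : ℕ → ℕ} (hs : IsPosSeq s) {τ : ℝ} (hτ : 1 < τ) :
    dimExprSup s τ = 0 := by
  rw [dimExprSup]
  have hten : Filter.Tendsto (fun n : ℕ => ((n : ℝ≥0∞) + 1) / (s n : ℝ≥0∞) ^ τ)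
      Filter.atTop (nhds 0) := by
    have heq : ∀ n : ℕ, ((n : ℝ≥0∞) + 1) / (s n : ℝ≥0∞) ^ τ
        = ENNReal.ofReal (((n:ℝ)+1) / (s n:ℝ)^τ) := fun n =>
      dim_term_eq (s n) n (by have := seq_lb hs n; omega) τ
    simp only [heq]
    rw [show (0:ℝ≥0∞) = ENNReal.ofReal 0 by simp]
    apply ENNReal.tendsto_ofReal
    -- real: (n+1)/(s n)^τ ≤ (n+1)^(1-τ) → 0
    have hub : ∀ n : ℕ, ((n:ℝ)+1) / (s n:ℝ)^τ ≤ ((n:ℝ)+1) ^ (1-τ) := by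
      intro n
      have h1 : (0:ℝ) < (n:ℝ)+1 := by positivity
      have h2 : ((n:ℝ)+1) ≤ (s n : ℝ) := by exact_mod_cast seq_lb hs n
      have h3 : ((n:ℝ)+1)^τ ≤ (s n:ℝ)^τ :=
        Real.rpow_le_rpow h1.le h2 (by linarith)
      have h4 : (0:ℝ) < ((n:ℝ)+1)^τ := Real.rpow_pos_of_pos h1 τ
      calc ((n:ℝ)+1) / (s n:ℝ)^τ ≤ ((n:ℝ)+1) / ((n:ℝ)+1)^τ := by
            apply div_le_div_of_nonneg_left h1.le h4 h3
        _ = ((n:ℝ)+1) ^ (1-τ) := by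
            rw [Real.rpow_sub h1, Real.rpow_one]
    have hlb : ∀ n : ℕ, (0:ℝ) ≤ ((n:ℝ)+1) / (s n:ℝ)^τ := by
      intro n
      have h2 : 0 < s n := by have := seq_lb hs n; omega
      have h3 : (0:ℝ) < (s n : ℝ) := by exact_mod_cast h2
      positivity
    have htend : Filter.Tendsto (fun n : ℕ => ((n:ℝ)+1) ^ (1-τ)) Filter.atTop (nhds 0) := by
      have h5 : Filter.Tendsto (fun x : ℝ => x ^ (1-τ)) Filter.atTop (nhds 0) := by
        have h6 := tendsto_rpow_neg_atTop (show 0 < τ - 1 by linarith)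
        simpa [neg_sub] using h6
      exact h5.comp (Filter.tendsto_atTop_add_const_right _ 1 tendsto_natCast_atTop_atTop)
    exact squeeze_zero hlb hub htend
  exact hten.limsup_eq

lemma upperDim_nonneg {s : ℕ → ℕ} (hs : IsPosSeq s) : 0 ≤ upperDim s := by
  rw [upperDim]
  exact le_csInf ⟨2, by norm_num, dimExprSup_zero_of_one_lt hs (by norm_num)⟩
    fun b hb => hb.1

lemma upperDim_le_two {s : ℕ → ℕ} (hs : IsPosSeq s) : upperDim s ≤ 2 := by
  rw [upperDim]
  exact csInf_le ⟨0, fun τ hτ => hτ.1⟩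
    ⟨by norm_num, dimExprSup_zero_of_one_lt hs (by norm_num)⟩

lemma le_upperDim {s' : ℕ → ℕ} (hps : IsPosSeq s') {τ : ℝ}
    (h : ∀ τ', 0 ≤ τ' → τ' < τ → dimExprSup s' τ' ≠ 0) : τ ≤ upperDim s' := by
  rw [upperDim]
  refine le_csInf ⟨2, by norm_num, dimExprSup_zero_of_one_lt hps (by norm_num)⟩ ?_
  intro b hb
  by_contra hcon
  push_neg at hcon
  exact h b hb.1 hcon hb.2

lemma dimExprSup_at_zero {s : ℕ → ℕ} : dimExprSup s 0 ≠ 0 := by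
  have h1 : (1:ℝ≥0∞) ≤ dimExprSup s 0 := by
    rw [dimExprSup]
    refine Filter.le_limsup_of_frequently_le' (Filter.Frequently.of_forall fun n => ?_)
    rw [ENNReal.rpow_zero, div_one]
    exact le_add_self
  intro h0
  rw [h0] at h1
  simp at h1

lemma exists_good {s : ℕ → ℕ} (hs1 : ∀ n, 1 ≤ s n) {τ : ℝ} (hdim : dimExprSup s τ ≠ 0) :
    ∃ C : ℝ, 1 ≤ C ∧ ∀ K : ℕ, ∃ g, K ≤ g ∧ ((s g : ℝ)) ^ τ ≤ C * ((g:ℝ)+1) := by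
  have hpos : 0 < dimExprSup s τ := pos_iff_ne_zero.mpr hdim
  obtain ⟨ε, hε0, hεlt⟩ := exists_between hpos
  have hεtop : ε ≠ ⊤ := fun h => by rw [h] at hεlt; exact (not_top_lt hεlt)
  have hεR : 0 < ε.toReal := ENNReal.toReal_pos hε0.ne' hεtop
  rw [dimExprSup] at hεlt
  have hfreq := Filter.frequently_lt_of_lt_limsup (by isBoundedDefault) hεlt
  refine ⟨max 1 (ε.toReal)⁻¹, le_max_left _ _, fun K => ?_⟩
  obtain ⟨g, hgK, hg⟩ := (Filter.frequently_atTop.mp hfreq) K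
  refine ⟨g, hgK, ?_⟩
  rw [dim_term_eq (s g) g (hs1 g) τ] at hg
  have hgR := (ENNReal.lt_ofReal_iff_toReal_lt hεtop).mp hg
  have hspos : (0:ℝ) < (s g : ℝ) := by have := hs1 g; exact_mod_cast this
  have hrp : (0:ℝ) < (s g:ℝ)^τ := Real.rpow_pos_of_pos hspos τ
  rw [lt_div_iff₀ hrp] at hgR
  have h2 : (s g:ℝ)^τ ≤ (ε.toReal)⁻¹ * ((g:ℝ)+1) := by
    rw [← mul_le_mul_iff_right₀ hεR, ← mul_assoc, mul_inv_cancel₀ hεR.ne', one_mul]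
    linarith
  calc (s g:ℝ)^τ ≤ (ε.toReal)⁻¹ * ((g:ℝ)+1) := h2
    _ ≤ max 1 (ε.toReal)⁻¹ * ((g:ℝ)+1) := by
        apply mul_le_mul_of_nonneg_right (le_max_right _ _) (by positivity)

lemma poly_le_exp (a : ℝ) {b : ℝ} (hb : 0 < b) (D : ℝ) :
    ∀ᶠ k : ℕ in Filter.atTop, D * ((k:ℝ))^a ≤ Real.exp (b * k) := by
  have h0 := tendsto_rpow_mul_exp_neg_mul_atTop_nhds_zero a b hb
  have h1 : Filter.Tendsto (fun k : ℕ => ((k:ℝ))^a * Real.exp (-b * k)) Filter.atTop (nhds 0) :=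
    h0.comp tendsto_natCast_atTop_atTop
  have hD1 : (0:ℝ) < max D 1 := lt_of_lt_of_le one_pos (le_max_right _ _)
  have h2 := h1.eventually (eventually_le_nhds (show (0:ℝ) < 1/(max D 1) by positivity))
  filter_upwards [h2] with k hk
  have hek : (0:ℝ) < Real.exp (b*k) := Real.exp_pos _
  have hka : (0:ℝ) ≤ ((k:ℝ))^a := Real.rpow_nonneg (Nat.cast_nonneg k) a
  have h3 : ((k:ℝ))^a = (((k:ℝ))^a * Real.exp (-b * k)) * Real.exp (b*k) := by
    rw [neg_mul, Real.exp_neg]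
    field_simp
  calc D * ((k:ℝ))^a ≤ max D 1 * ((k:ℝ))^a :=
        mul_le_mul_of_nonneg_right (le_max_left _ _) hka
    _ = max D 1 * ((((k:ℝ))^a * Real.exp (-b * k)) * Real.exp (b*k)) := by rw [← h3]
    _ ≤ max D 1 * ((1/(max D 1)) * Real.exp (b*k)) := by
        refine mul_le_mul_of_nonneg_left (mul_le_mul_of_nonneg_right hk hek.le) hD1.le
    _ = Real.exp (b*k) := by field_simp

end PartE1

section PartE2

lemma ss_dim_ge {s : ℕ → ℕ} (hs : StrictMono s) (hs0 : 1 ≤ s 0) {τ C : ℝ}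
    (hτ : 0 < τ) (hC : 1 ≤ C) {nt : ℕ → ℕ} (hnt : ∀ x, x ≤ nt x)
    (hG : ∀ x, ((s (nt x) : ℝ)) ^ τ ≤ C * ((nt x : ℝ)+1))
    {τ' : ℝ} (hτ'0 : 0 ≤ τ') (hτ' : τ' < τ) :
    dimExprSup (ss s nt) τ' ≠ 0 := by
  set θ := τ' / τ with hθ
  have hθ0 : 0 ≤ θ := div_nonneg hτ'0 hτ.le
  have hθ1 : θ < 1 := by rw [hθ, div_lt_one hτ]; exact hτ'
  have hb : 0 < (1 - θ) * Real.log 2 := by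
    have := Real.log_pos (by norm_num : (1:ℝ) < 2)
    nlinarith
  have hev := poly_le_exp τ' hb (4 ^ τ' * C ^ θ)
  obtain ⟨K₁, hK₁⟩ := Filter.eventually_atTop.mp hev
  have hfreq : ∃ᶠ N : ℕ in Filter.atTop,
      (1:ℝ≥0∞) ≤ ((N : ℝ≥0∞) + 1) / (ss s nt N : ℝ≥0∞) ^ τ' := by
    rw [Filter.frequently_atTop]
    intro K
    obtain ⟨k, hkK, hkG⟩ := bn_hits (G := {g : ℕ | ((s g : ℝ)) ^ τ ≤ C * ((g:ℝ)+1)})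
      hnt hG (max K K₁ + 1)
    set n := bn nt k with hn
    have hn1 : 1 ≤ n := bn_pos k
    set g := n - 1 with hg
    have hgn : g + 1 = n := by omega
    have hsg1 : 1 ≤ s g := le_trans hs0 (hs.monotone (Nat.zero_le g))
    have hgG : ((s g : ℝ)) ^ τ ≤ C * ((g:ℝ)+1) := hkG
    set N := NN nt (k+1) - 1 with hN
    have hNk : NN nt (k+1) = NN nt k + n := NN_succ k
    have hN1 : N + 1 = NN nt (k+1) := by
      have := NN_ge (nt := nt) (k+1)
      omega
    have hNgeK : K ≤ N := by
      have := NN_ge (nt := nt) (k+1)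
      omega
    refine ⟨N, hNgeK, ?_⟩
    have hss : ss s nt N = cc s nt k + (s g - s 0) := by
      rw [hN]; exact ss_top hs k
    have hcc : cc s nt k ≤ (k+1) + k * s g := cc_le hs hnt k
    have hssle : ss s nt N ≤ 2 * (k+1) * s g := by
      have h1 : s g - s 0 ≤ s g := by omega
      have h2 : (k+1) ≤ (k+1) * s g := Nat.le_mul_of_pos_right _ (by omega)
      calc ss s nt N ≤ (k+1) + k * s g + s g := by omega
        _ = (k+1) + (k+1) * s g := by ring
        _ ≤ (k+1) * s g + (k+1) * s g := by omega
        _ = 2 * (k+1) * s g := by ring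
    have hss1 : 1 ≤ ss s nt N := by
      have hcc1 : k + 1 ≤ cc s nt k := by rw [cc]; omega
      omega
    have hpow : 2 ^ k ≤ g + 1 := by rw [hgn, hn]; exact bn_pow hnt k
    have hnN : n ≤ N + 1 := by omega
    rw [dim_term_eq (ss s nt N) N (by omega) τ', ENNReal.one_le_ofReal]
    have hssR : (0:ℝ) < (ss s nt N : ℝ) := by
      exact_mod_cast (show 0 < ss s nt N by omega)
    rw [le_div_iff₀ (Real.rpow_pos_of_pos hssR τ'), one_mul]
    set A := ((s g : ℕ) : ℝ) with hA
    have hA1 : (1:ℝ) ≤ A := by rw [hA]; exact_mod_cast hsg1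
    set x := ((g:ℝ)+1) with hx
    have hx0 : (0:ℝ) < x := by positivity
    have step1 : ((ss s nt N : ℕ):ℝ)^τ' ≤ ((2*(k+1)*(s g) : ℕ):ℝ)^τ' :=
      Real.rpow_le_rpow (by positivity) (by exact_mod_cast hssle) hτ'0
    have hcast : ((2*(k+1)*(s g) : ℕ):ℝ) = 2*((k:ℝ)+1)*A := by push_cast; ring
    have step2 : (2*((k:ℝ)+1)*A)^τ' = (2*((k:ℝ)+1))^τ' * A^τ' :=
      Real.mul_rpow (by positivity) (by positivity)
    have step3 : A^τ' ≤ (C*x)^θ := by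
      have h1 : A^τ' = (A^τ)^θ := by
        rw [← Real.rpow_mul (by positivity : (0:ℝ) ≤ A)]
        congr 1
        rw [hθ]
        field_simp
      rw [h1]
      exact Real.rpow_le_rpow (Real.rpow_nonneg (by positivity) τ) hgG hθ0
    have step4 : (C*x)^θ = C^θ * x^θ :=
      Real.mul_rpow (by linarith) hx0.le
    have key : (2*((k:ℝ)+1))^τ' * C^θ ≤ x^(1-θ) := by
      have hk1 : 1 ≤ k := by omega
      have hkR1 : (1:ℝ) ≤ (k:ℝ) := by exact_mod_cast hk1
      have h41 : (2*((k:ℝ)+1)) ≤ 4*(k:ℝ) := by linarith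
      have h42 : (2*((k:ℝ)+1))^τ' ≤ (4*(k:ℝ))^τ' :=
        Real.rpow_le_rpow (by positivity) h41 hτ'0
      have h43 : (4*(k:ℝ))^τ' = 4^τ' * ((k:ℝ))^τ' :=
        Real.mul_rpow (by norm_num) (by positivity)
      have h44 := hK₁ k (by omega)
      have h45 : Real.exp (((1-θ)*Real.log 2) * k) ≤ x^(1-θ) := by
        have h46 : ((2:ℝ)^k) ≤ x := by rw [hx]; exact_mod_cast hpow
        have h47 : ((2:ℝ)^k)^(1-θ) ≤ x^(1-θ) :=
          Real.rpow_le_rpow (by positivity) h46 (by linarith)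
        have h48 : ((2:ℝ)^k)^(1-θ) = Real.exp (((1-θ)*Real.log 2) * k) := by
          rw [← Real.rpow_natCast 2 k, ← Real.rpow_mul (by norm_num),
            Real.rpow_def_of_pos (by norm_num)]
          ring_nf
        rw [← h48]; exact h47
      calc (2*((k:ℝ)+1))^τ' * C^θ ≤ (4*(k:ℝ))^τ' * C^θ :=
            mul_le_mul_of_nonneg_right h42 (Real.rpow_nonneg (by linarith) θ)
        _ = (4^τ' * C^θ) * ((k:ℝ))^τ' := by rw [h43]; ring
        _ ≤ Real.exp (((1-θ)*Real.log 2) * k) := h44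
        _ ≤ x^(1-θ) := h45
    have hxsplit : x^θ * x^(1-θ) = x := by
      rw [← Real.rpow_add hx0]
      norm_num
    have hfinal : ((ss s nt N : ℕ):ℝ)^τ' ≤ x := by
      calc ((ss s nt N : ℕ):ℝ)^τ' ≤ ((2*(k+1)*(s g) : ℕ):ℝ)^τ' := step1
        _ = (2*((k:ℝ)+1)*A)^τ' := by rw [hcast]
        _ = (2*((k:ℝ)+1))^τ' * A^τ' := step2
        _ ≤ (2*((k:ℝ)+1))^τ' * (C^θ * x^θ) := by
            refine mul_le_mul_of_nonneg_left ?_ (Real.rpow_nonneg (by positivity) τ')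
            rw [← step4]; exact step3
        _ = ((2*((k:ℝ)+1))^τ' * C^θ) * x^θ := by ring
        _ ≤ x^(1-θ) * x^θ := mul_le_mul_of_nonneg_right key (Real.rpow_nonneg hx0.le θ)
        _ = x := by rw [mul_comm]; exact hxsplit
    have hxN : x ≤ (N:ℝ)+1 := by
      have h9 : g + 1 ≤ N + 1 := by omega
      rw [hx]
      exact_mod_cast h9
    linarith
  have hge : (1:ℝ≥0∞) ≤ dimExprSup (ss s nt) τ' := by
    rw [dimExprSup]
    exact Filter.le_limsup_of_frequently_le' hfreq
  intro h0
  rw [h0] at hge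
  simp at hge

end PartE2

section PartF
set_option linter.unusedSectionVars false

variable {X : Type*} [MeasurableSpace X] {μ : Measure X} [IsProbabilityMeasure μ]
  {ι : Type*} [Fintype ι] {P : ι → Set X}

lemma main_construction (e : X ≃ᵐ X) (he : MeasurePreserving (⇑e) μ μ) (hP : IsPartition P)
    {s : ℕ → ℕ} (hgen : IsEntGenSeq μ (⇑e) P s) {τ : ℝ} (hτ0 : 0 ≤ τ)
    (hdim : dimExprSup s τ ≠ 0) :
    ∃ s', IsEntGenSeq μ (⇑e.symm) P s' ∧ τ ≤ upperDim s' := by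
  obtain ⟨hsm, hs0'⟩ := hgen.1
  have hs0 : 1 ≤ s 0 := hs0'
  have hs1 : ∀ n, 1 ≤ s n := fun n => le_trans hs0 (hsm.monotone (Nat.zero_le n))
  rcases eq_or_lt_of_le hτ0 with hτz | hτpos
  · refine ⟨ss s id, ss_entGen e he hP hsm hs0 (fun x => le_refl x) hgen, ?_⟩
    rw [← hτz]
    exact upperDim_nonneg (ss_isPosSeq hsm hs0)
  · obtain ⟨C, hC1, hCg⟩ := exists_good hs1 hdim
    choose nt hnt1 hnt2 using hCg
    refine ⟨ss s nt, ss_entGen e he hP hsm hs0 hnt1 hgen, ?_⟩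
    refine le_upperDim (ss_isPosSeq hsm hs0) ?_
    intro τ' h0' hlt'
    exact ss_dim_ge hsm hs0 hτpos hC1 hnt1 hnt2 h0' hlt'

lemma upperEntDimPart_le (e : X ≃ᵐ X) (he : MeasurePreserving (⇑e) μ μ) (hP : IsPartition P) :
    upperEntDimPart μ (⇑e) P ≤ upperEntDimPart μ (⇑e.symm) P := by
  rw [upperEntDimPart, upperEntDimPart]
  set S₁ := {d : ℝ | ∃ s : ℕ → ℕ, IsEntGenSeq μ (⇑e) P s ∧ d = upperDim s} with hS₁
  set S₂ := {d : ℝ | ∃ s : ℕ → ℕ, IsEntGenSeq μ (⇑e.symm) P s ∧ d = upperDim s} with hS₂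
  have hbdd₂ : BddAbove S₂ := by
    refine ⟨2, ?_⟩
    rintro d ⟨s', hs', rfl⟩
    exact upperDim_le_two hs'.1
  rcases Set.eq_empty_or_nonempty S₁ with h1 | h1
  · rw [h1, Real.sSup_empty]
    rcases Set.eq_empty_or_nonempty S₂ with h2 | h2
    · rw [h2, Real.sSup_empty]
    · obtain ⟨d, hd⟩ := h2
      obtain ⟨s', hs', rfl⟩ := hd
      exact le_trans (upperDim_nonneg hs'.1) (le_csSup hbdd₂ ⟨s', hs', rfl⟩)
  · obtain ⟨d₀, s₀, hgen₀, hd₀⟩ := h1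
    obtain ⟨s₁, hgen₁, _⟩ := main_construction e he hP hgen₀ le_rfl dimExprSup_at_zero
    have hS₂ne : S₂.Nonempty := ⟨upperDim s₁, s₁, hgen₁, rfl⟩
    have hsup₂0 : 0 ≤ sSup S₂ :=
      le_trans (upperDim_nonneg hgen₁.1) (le_csSup hbdd₂ ⟨s₁, hgen₁, rfl⟩)
    refine Real.sSup_le ?_ hsup₂0
    rintro d ⟨s, hgen, rfl⟩
    by_contra hcon
    push_neg at hcon
    obtain ⟨τ, hτ1, hτ2⟩ := exists_between hcon
    have hτ0 : 0 ≤ τ := le_trans hsup₂0 hτ1.le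
    have hdim : dimExprSup s τ ≠ 0 := by
      intro h0
      have hle : upperDim s ≤ τ := csInf_le ⟨0, fun x hx => hx.1⟩ ⟨hτ0, h0⟩
      linarith
    obtain ⟨s', hgen', hle⟩ := main_construction e he hP hgen hτ0 hdim
    have : τ ≤ sSup S₂ := le_trans hle (le_csSup hbdd₂ ⟨s', hgen', rfl⟩)
    linarith

lemma upperEntDimPart_symm (e : X ≃ᵐ X) (he : MeasurePreserving (⇑e) μ μ)
    (hP : IsPartition P) :
    upperEntDimPart μ (⇑e) P = upperEntDimPart μ (⇑e.symm) P := by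
  refine le_antisymm (upperEntDimPart_le e he hP) ?_
  have h2 := upperEntDimPart_le e.symm (he.symm e) hP
  rwa [MeasurableEquiv.symm_symm] at h2

end PartF


/-- For an invertible measure-preserving system,
`D̄_μ(T,α) = D̄_μ(T⁻¹,α)`, and consequently `D̄_μ(X,T) = D̄_μ(X,T⁻¹)`. -/
theorem upperEntDim_inv {X : Type*} [MeasurableSpace X]
    (μ : Measure X) [IsProbabilityMeasure μ] (e : X ≃ᵐ X) (he : MeasurePreserving ⇑e μ μ)
    {ι : Type*} [Fintype ι] (P : ι → Set X) (hP : IsPartition P) :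
    upperEntDimPart μ ⇑e P = upperEntDimPart μ ⇑e.symm P ∧
    upperEntDim μ ⇑e = upperEntDim μ ⇑e.symm := by
  constructor
  · exact upperEntDimPart_symm e he hP
  · rw [upperEntDim, upperEntDim]
    congr 1
    ext d
    constructor
    · rintro ⟨k, Q, hQ, rfl⟩
      exact ⟨k, Q, hQ, upperEntDimPart_symm e he hQ⟩
    · rintro ⟨k, Q, hQ, rfl⟩
      exact ⟨k, Q, hQ, (upperEntDimPart_symm e he hQ).symm⟩

end EntDim
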